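/- Let f : ℝⁿ → ℝ be twice continuously differentiable, bounded below, and satisfying ∇²f(x) ⪯ L₊·I for all x with L₊ > 0. Fix a stepsize α with 0 < α < 2/L₊ and define the gradient descent sequence x_{k+1} = x_k − α∇f(x_k) from any initial point x₀. Then the gradient norms converge to zero: ‖∇f(x_k)‖ → 0 as k → ∞. -/

import Mathlib

open Filter

section aux

variable {n : ℕ}

local notation "E" => EuclideanSpace ℝ (Fin n)

lemma descent_lemma (f : E → ℝ) (L : ℝ) (hf : ContDiff ℝ 2 f)
    (hhess : ∀ x v : E, iteratedFDeriv ℝ 2 f x ![v, v] ≤ L * ‖v‖ ^ 2)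
    (x v : E) :
    f (x + v) ≤ f x + fderiv ℝ f x v + L / 2 * ‖v‖ ^ 2 := by
  set c : ℝ → E := fun t => x + t • v with hc
  have hcderiv : ∀ t : ℝ, HasDerivAt c v t := by
    intro t
    simpa [hc] using ((hasDerivAt_id t).smul_const v).const_add x
  have hfd : Differentiable ℝ f := hf.differentiable two_ne_zero
  have hfd' : Differentiable ℝ (fderiv ℝ f) := by
    have := hf.fderiv_right (m := 1) (by norm_num)
    exact this.differentiable one_ne_zero
  set g : ℝ → ℝ := fun t => f (c t) with hg
  set g' : ℝ → ℝ := fun t => fderiv ℝ f (c t) v with hg'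
  set g'' : ℝ → ℝ := fun t => fderiv ℝ (fderiv ℝ f) (c t) v v with hg''
  have hgderiv : ∀ t : ℝ, HasDerivAt g (g' t) t := fun t =>
    (hfd (c t)).hasFDerivAt.comp_hasDerivAt t (hcderiv t)
  have hg'deriv : ∀ t : ℝ, HasDerivAt g' (g'' t) t := by
    intro t
    have h1 : HasDerivAt (fun s => fderiv ℝ f (c s))
        (fderiv ℝ (fderiv ℝ f) (c t) v) t :=
      (hfd' (c t)).hasFDerivAt.comp_hasDerivAt t (hcderiv t)
    simpa using h1.clm_apply (hasDerivAt_const t v)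
  have hbound : ∀ t : ℝ, g'' t ≤ L * ‖v‖ ^ 2 := by
    intro t
    have := hhess (c t) v
    rwa [iteratedFDeriv_two_apply, Matrix.cons_val_zero, Matrix.cons_val_one,
      Matrix.cons_val_zero] at this
  -- φ t = g' t - g' 0 - L‖v‖² t ≤ 0 for t ≥ 0
  set φ : ℝ → ℝ := fun t => g' t - g' 0 - L * ‖v‖ ^ 2 * t with hφ
  have hφderiv : ∀ t : ℝ, HasDerivAt φ (g'' t - L * ‖v‖ ^ 2) t := by
    intro t
    simpa [hφ, Pi.sub_def] using ((hg'deriv t).sub_const (g' 0)).sub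
      ((hasDerivAt_id t).const_mul (L * ‖v‖ ^ 2))
  have hφanti : AntitoneOn φ (Set.Ici (0 : ℝ)) := by
    apply antitoneOn_of_deriv_nonpos (convex_Ici 0)
    · exact fun t _ => ((hφderiv t).continuousAt).continuousWithinAt
    · exact fun t _ => ((hφderiv t).differentiableAt).differentiableWithinAt
    · intro t _
      rw [(hφderiv t).deriv]
      linarith [hbound t]
  have hφnonpos : ∀ t : ℝ, 0 ≤ t → φ t ≤ 0 := by
    intro t ht
    have := hφanti (Set.self_mem_Ici) (Set.mem_Ici.mpr ht) ht
    simpa [hφ] using this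
  -- ψ t = g t - g 0 - g' 0 * t - L‖v‖²/2 * t²
  set ψ : ℝ → ℝ := fun t => g t - g 0 - g' 0 * t - L * ‖v‖ ^ 2 / 2 * t ^ 2 with hψ
  have hψderiv : ∀ t : ℝ, HasDerivAt ψ (φ t) t := by
    intro t
    have h2 : HasDerivAt (fun s : ℝ => L * ‖v‖ ^ 2 / 2 * s ^ 2)
        (L * ‖v‖ ^ 2 / 2 * (2 * t)) t := by
      simpa using ((hasDerivAt_pow 2 t).const_mul (L * ‖v‖ ^ 2 / 2))
    have := (((hgderiv t).sub_const (g 0)).sub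
      ((hasDerivAt_id t).const_mul (g' 0))).sub h2
    refine this.congr_deriv ?_
    simp [hφ]; ring
  have hψanti : AntitoneOn ψ (Set.Ici (0 : ℝ)) := by
    apply antitoneOn_of_deriv_nonpos (convex_Ici 0)
    · exact fun t _ => ((hψderiv t).continuousAt).continuousWithinAt
    · exact fun t _ => ((hψderiv t).differentiableAt).differentiableWithinAt
    · intro t ht
      rw [(hψderiv t).deriv]
      exact hφnonpos t (le_of_lt (by simpa using ht))
  have h1 : ψ 1 ≤ ψ 0 := hψanti Set.self_mem_Ici (Set.mem_Ici.mpr zero_le_one) zero_le_one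
  have e0 : c 0 = x := by simp [hc]
  have e1 : c 1 = x + v := by simp [hc]
  simp only [hψ, hg, hg', e0, e1, one_pow, mul_one, zero_pow, mul_zero, sub_zero,
    pow_two] at h1
  nlinarith [h1]

end aux

/-- Convergence to stationary points: if `f` is C², bounded below, with `∇²f(x) ⪯ L₊·I`
everywhere (`L₊ > 0`), and `0 < α < 2/L₊`, then the gradient descent sequence
`x_{k+1} = x_k − α∇f(x_k)` satisfies `‖∇f(x_k)‖ → 0`. -/
theorem stmt_8 {n : ℕ} (f : EuclideanSpace ℝ (Fin n) → ℝ) (L : ℝ) (hL : 0 < L)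
    (hf : ContDiff ℝ 2 f)
    (hhess : ∀ x v : EuclideanSpace ℝ (Fin n),
      iteratedFDeriv ℝ 2 f x ![v, v] ≤ L * ‖v‖ ^ 2)
    (c : ℝ) (hbdd : ∀ x, c ≤ f x)
    (α : ℝ) (hα : 0 < α) (hα2 : α < 2 / L)
    (x : ℕ → EuclideanSpace ℝ (Fin n)) (x0 : EuclideanSpace ℝ (Fin n))
    (hx0 : x 0 = x0)
    (hiter : ∀ k : ℕ, x (k + 1) = x k - α • gradient f (x k)) :
    Tendsto (fun k => ‖gradient f (x k)‖) atTop (nhds 0) := by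
  set g : ℕ → ℝ := fun k => ‖gradient f (x k)‖ with hgdef
  set δ : ℝ := α - L * α ^ 2 / 2 with hδ
  have hδpos : 0 < δ := by
    have h2 : α * L < 2 := (lt_div_iff₀ hL).mp hα2
    have : 0 < α * (2 - L * α) := by nlinarith
    rw [hδ]; nlinarith
  have hkey : ∀ y v : EuclideanSpace ℝ (Fin n),
      (inner ℝ (gradient f y) v : ℝ) = fderiv ℝ f y v := fun y v =>
    InnerProductSpace.toDual_symm_apply
  have step : ∀ k, f (x (k + 1)) ≤ f (x k) - δ * g k ^ 2 := by
    intro k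
    have h := descent_lemma f L hf hhess (x k) (-(α • gradient f (x k)))
    have hxk : x k + -(α • gradient f (x k)) = x (k + 1) := by
      rw [hiter k, sub_eq_add_neg]
    have hfder : fderiv ℝ f (x k) (-(α • gradient f (x k))) = -(α * g k ^ 2) := by
      rw [← hkey, inner_neg_right, real_inner_smul_right,
        real_inner_self_eq_norm_sq]
    have hnrm : ‖-(α • gradient f (x k))‖ ^ 2 = α ^ 2 * g k ^ 2 := by
      rw [norm_neg, norm_smul, Real.norm_eq_abs, abs_of_pos hα, mul_pow]
    rw [hxk, hfder, hnrm] at h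
    rw [hδ]
    nlinarith [h]
  have hsum : ∀ N, ∑ k ∈ Finset.range N, δ * g k ^ 2 ≤ f (x 0) - c := by
    intro N
    have htel : ∀ N, ∑ k ∈ Finset.range N, δ * g k ^ 2 ≤ f (x 0) - f (x N) := by
      intro N
      induction N with
      | zero => simp
      | succ N ih =>
        rw [Finset.sum_range_succ]
        have := step N
        linarith
    have := hbdd (x N)
    linarith [htel N]
  have hsummable : Summable (fun k => δ * g k ^ 2) :=
    summable_of_sum_range_le (fun k => mul_nonneg hδpos.le (sq_nonneg _)) hsum
  have h0 : Tendsto (fun k => δ * g k ^ 2) atTop (nhds 0) :=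
    hsummable.tendsto_atTop_zero
  have h1 : Tendsto (fun k => g k ^ 2) atTop (nhds 0) := by
    have := h0.const_mul (1 / δ)
    simp only [mul_zero] at this
    convert this using 2 with k
    field_simp
  have h2 : Tendsto (fun k => Real.sqrt (g k ^ 2)) atTop (nhds (Real.sqrt 0)) :=
    (Real.continuous_sqrt.continuousAt).tendsto.comp h1
  simp only [Real.sqrt_zero] at h2
  convert h2 using 2 with k
  rw [Real.sqrt_sq (norm_nonneg _)]
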